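/- Let α ≥ 0, let f ∈ L(α), and let g : Δ → [0,∞] be such that f ≍ g. Then Λ(f)(θ) = Λ(g)(θ) for all θ ∈ (0,1]. -/

import Mathlib

open Metric Set Filter
open scoped ENNReal NNReal

noncomputable section

/-- Least number of closed balls of radius `r` needed to cover `E`. -/
def coveringNumber {X : Type*} [MetricSpace X] (r : ℝ) (E : Set X) : ℕ∞ :=
  sInf {n : ℕ∞ | ∃ s : Finset X, (s.card : ℕ∞) = n ∧ E ⊆ ⋃ x ∈ s, Metric.closedBall x r}

/-- Packing number: the largest cardinality of a subset of `E` whose closed `2r`-balls are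
pairwise disjoint. -/
def packingNumber {X : Type*} [MetricSpace X] (r : ℝ) (E : Set X) : ℕ∞ :=
  sSup {n : ℕ∞ | ∃ s : Finset X, (s.card : ℕ∞) = n ∧ ↑s ⊆ E ∧
    (s : Set X).Pairwise fun x y =>
      Disjoint (Metric.closedBall x (2 * r)) (Metric.closedBall y (2 * r))}

/-- Base-2 logarithm `ℕ∞ → ℝ≥0∞`, clamped below at `0`. -/
def elog2 (n : ℕ∞) : ℝ≥0∞ :=
  if n = ⊤ then ⊤ else ENNReal.ofReal (Real.logb 2 (n.toNat : ℝ))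

/-- The infimal two-scale branching function `β_X(u,v) = log₂ inf_x P_{2^{-u}}(B(x,2^{-v}))`. -/
def brL (X : Type*) [MetricSpace X] (u v : ℝ) : ℝ≥0∞ :=
  elog2 (⨅ x : X, packingNumber ((2 : ℝ) ^ (-u)) (Metric.closedBall x ((2 : ℝ) ^ (-v))))

/-- The supremal two-scale branching function `ν_X(u,v) = log₂ sup_x N_{2^{-u}}(B(x,2^{-v}))`. -/
def brU (X : Type*) [MetricSpace X] (u v : ℝ) : ℝ≥0∞ :=
  elog2 (⨆ x : X, coveringNumber ((2 : ℝ) ^ (-u)) (Metric.closedBall x ((2 : ℝ) ^ (-v))))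

/-- The lower spectrum `dim_L^θ X`, valued in `[0,∞]`. -/
def lowerSpectrum (X : Type*) [MetricSpace X] (θ : ℝ) : ℝ≥0∞ :=
  ⨆ s ∈ {s : ℝ | 0 ≤ s ∧ ∃ C : ℝ, 0 < C ∧ ∀ r : ℝ, 0 < r → r < 1 → ∀ x : X,
      ENNReal.ofReal (C * (r ^ (θ - 1)) ^ s) ≤
        (coveringNumber r (Metric.closedBall x (r ^ θ)) : ℝ≥0∞)},
    ENNReal.ofReal s

/-- The monotone (quasi-) lower spectrum. -/
def monoLowerSpectrum (X : Type*) [MetricSpace X] (θ : ℝ) : ℝ≥0∞ :=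
  ⨆ s ∈ {s : ℝ | 0 ≤ s ∧ ∃ C : ℝ, 0 < C ∧ ∀ r R : ℝ, 0 < r → r ≤ r ^ θ → r ^ θ ≤ R → R < 1 →
      ∀ x : X, ENNReal.ofReal (C * (R / r) ^ s) ≤
        (coveringNumber r (Metric.closedBall x R) : ℝ≥0∞)},
    ENNReal.ofReal s

/-- The class `L(α)`: functions on `Δ = {v ≤ u}` that are nonnegative, vanish on the diagonal,
are superadditive, and are `α`-Lipschitz in the first variable. -/
def MemL (α : ℝ) (f : ℝ → ℝ → ℝ) : Prop :=
  (∀ u v : ℝ, v ≤ u → 0 ≤ f u v) ∧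
  (∀ u : ℝ, f u u = 0) ∧
  (∀ u w v : ℝ, v ≤ w → w ≤ u → f u w + f w v ≤ f u v) ∧
  (∀ v u₁ u₂ : ℝ, v ≤ u₁ → v ≤ u₂ → |f u₁ v - f u₂ v| ≤ α * |u₁ - u₂|)

/-- The class `H(α)`: functions `(0,1] → [0,α]` satisfying (S) and (W). -/
def MemH (α : ℝ) (φ : ℝ → ℝ) : Prop :=
  (∀ θ : ℝ, 0 < θ → θ ≤ 1 → 0 ≤ φ θ ∧ φ θ ≤ α) ∧
  (∀ lam θ : ℝ, 0 < lam → lam ≤ 1 → 0 < θ → θ ≤ 1 → φ θ + θ * φ lam ≤ φ (lam * θ)) ∧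
  (∀ lam θ : ℝ, 0 < lam → lam ≤ 1 → 0 < θ → θ ≤ 1 → φ (lam * θ) ≤ (1 - θ) * α + θ * φ lam)

/-- The class `M(α)`: functions `(0,1] → [0,α]` satisfying (W) and (M). -/
def MemM (α : ℝ) (φ : ℝ → ℝ) : Prop :=
  (∀ θ : ℝ, 0 < θ → θ ≤ 1 → 0 ≤ φ θ ∧ φ θ ≤ α) ∧
  (∀ lam θ : ℝ, 0 < lam → lam ≤ 1 → 0 < θ → θ ≤ 1 → φ (lam * θ) ≤ (1 - θ) * α + θ * φ lam) ∧
  (∀ θ₁ θ₂ : ℝ, 0 < θ₁ → θ₁ ≤ θ₂ → θ₂ < 1 → φ θ₂ / (1 - θ₂) ≤ φ θ₁ / (1 - θ₁))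

/-- The normalized limit `Λ(f)(θ) = liminf_{u→∞} f(u, θu)/u` for real-valued `f`. -/
def Lam (f : ℝ → ℝ → ℝ) (θ : ℝ) : ℝ :=
  Filter.liminf (fun u => f u (θ * u) / u) Filter.atTop

/-- The normalized limit `Λ(g)(θ) = liminf_{u→∞} g(u, θu)/u` for `[0,∞]`-valued `g`. -/
def LamE (g : ℝ → ℝ → ENNReal) (θ : ℝ) : ℝ≥0∞ :=
  Filter.liminf (fun u => g u (θ * u) / ENNReal.ofReal u) Filter.atTop

/-- The two-piece affine function `φ_{α,λ,t}` through `(0,α)`, `(λ,t)` and `(1,0)`. -/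
def phiFun (α lam t : ℝ) : ℝ → ℝ := fun θ =>
  if θ ≤ lam then α + (θ / lam) * (t - α) else t * (1 - θ) / (1 - lam)

/-- The maximal element `h_{g,z}` of `L(α)` agreeing with `g` on the strip `{(u,z) : u ≥ z}`. -/
def hFun (α : ℝ) (g : ℝ → ℝ) (z : ℝ) : ℝ → ℝ → ℝ := fun u v =>
  if z ≤ v then g u - g v else α * (u - v)

/-- A metric space is `η`-uniform if `η(u)/u → 0` and `ν_X ≤ β_X + η(u)` on `Δ`. -/
def IsEtaUniform (η : ℝ → ℝ) (X : Type*) [MetricSpace X] : Prop :=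
  Filter.Tendsto (fun u => η u / u) Filter.atTop (nhds 0) ∧
  ∀ u v : ℝ, v ≤ u → brU X u v ≤ brL X u v + ENNReal.ofReal (η u)

/-- A metric space is uniform if it is `η`-uniform for some `η`. -/
def IsUniform (X : Type*) [MetricSpace X] : Prop := ∃ η : ℝ → ℝ, IsEtaUniform η X

/-- The relation `f ≍ g` between a real-valued and an `[0,∞]`-valued function on `Δ`. -/
def AsympRE (f : ℝ → ℝ → ℝ) (g : ℝ → ℝ → ENNReal) : Prop :=
  ∃ η : ℝ → ℝ, (∀ u : ℝ, 0 ≤ η u) ∧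
    Filter.Tendsto (fun u => η u / u) Filter.atTop (nhds 0) ∧
    ∀ u v : ℝ, 0 ≤ v → v ≤ u →
      (v ≤ u - η u → ENNReal.ofReal (f u (v + η u) - η u) ≤ g u v) ∧
      (η u ≤ v → g u v ≤ ENNReal.ofReal (f u (v - η u) + η u))

set_option maxHeartbeats 2000000 in
/-- The normalized limit `Λ` is invariant under the relation `≍`. -/
theorem Lam_eq_of_asymp (α : ℝ) (hα : 0 ≤ α) (f : ℝ → ℝ → ℝ) (hf : MemL α f)
    (g : ℝ → ℝ → ℝ≥0∞) (hfg : AsympRE f g) :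
    ∀ θ : ℝ, 0 < θ → θ ≤ 1 → LamE g θ = ENNReal.ofReal (Lam f θ) := by
  obtain ⟨η, hη0, hηo, hηb⟩ := hfg
  obtain ⟨hf0, hfd, hfs, hfl⟩ := hf
  intro θ hθ0 hθ1
  have hLam : Lam f θ = Filter.liminf (fun u => f u (θ * u) / u) Filter.atTop := rfl
  have hLamE : LamE g θ
      = Filter.liminf (fun u => g u (θ * u) / ENNReal.ofReal u) Filter.atTop := rfl
  obtain ⟨F, hFdef⟩ : ∃ F : ℝ → ℝ, F = fun u => f u (θ * u) := ⟨_, rfl⟩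
  rw [show (fun u => f u (θ * u) / u) = fun u => F u / u from by rw [hFdef]] at hLam
  set L : ℝ := Lam f θ with hLdef
  -- η is eventually smaller than any linear function
  have hsmall : ∀ ε : ℝ, 0 < ε → ∀ᶠ u in Filter.atTop, η u < ε * u := by
    intro ε hε
    filter_upwards [hηo.eventually_lt_const hε, Filter.eventually_gt_atTop 0] with u h1 h2
    calc η u = η u / u * u := (div_mul_cancel₀ (η u) h2.ne').symm
    _ < ε * u := mul_lt_mul_of_pos_right h1 h2
  have hFnn : ∀ u : ℝ, 0 ≤ u → 0 ≤ F u := fun u hu => by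
    rw [hFdef]; exact hf0 u (θ * u) (by nlinarith)
  have hFle : ∀ u : ℝ, 0 ≤ u → F u ≤ α * (u - θ * u) := by
    intro u hu
    rw [hFdef]
    have h := hfl (θ * u) u (θ * u) (by nlinarith) le_rfl
    rw [hfd (θ * u), sub_zero, abs_of_nonneg (by nlinarith : (0:ℝ) ≤ u - θ * u)] at h
    exact le_trans (le_abs_self _) h
  have hbdd_above : Filter.IsBoundedUnder (· ≤ ·) Filter.atTop (fun u => F u / u) := by
    refine Filter.isBoundedUnder_of_eventually_le (a := α) ?_
    filter_upwards [Filter.eventually_gt_atTop 0] with u hu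
    rw [div_le_iff₀ hu]
    nlinarith [hFle u hu.le, mul_nonneg hα (mul_nonneg hθ0.le hu.le)]
  have hbdd_below : Filter.IsBoundedUnder (· ≥ ·) Filter.atTop (fun u => F u / u) := by
    refine Filter.isBoundedUnder_of_eventually_ge (a := (0:ℝ)) ?_
    filter_upwards [Filter.eventually_gt_atTop 0] with u hu
    exact div_nonneg (hFnn u hu.le) hu.le
  have hcob : Filter.IsCoboundedUnder (· ≥ ·) Filter.atTop (fun u => F u / u) :=
    hbdd_above.isCoboundedUnder_ge
  have hL0 : 0 ≤ L := by
    rw [hLam]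
    refine Filter.le_liminf_of_le hcob ?_
    filter_upwards [Filter.eventually_gt_atTop 0] with u hu
    exact div_nonneg (hFnn u hu.le) hu.le
  -- UPPER BOUND
  have upper : ∀ δ : ℝ, 0 < δ → LamE g θ ≤ ENNReal.ofReal (L + δ) := by
    intro δ hδ
    set m : ℝ := min (1/2) (δ / (4 * (α + 1))) with hmdef
    have hm0 : 0 < m := lt_min (by norm_num) (by positivity)
    have hm2 : m ≤ 1/2 := min_le_left _ _
    have hmδ : α * m ≤ δ / 4 := by
      have h1 : m ≤ δ / (4 * (α + 1)) := min_le_right _ _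
      have h2 : α * m ≤ α * (δ / (4 * (α + 1))) := by nlinarith
      have h3 : α * (δ / (4 * (α + 1))) ≤ δ / 4 := by
        rw [mul_div_assoc', div_le_div_iff₀ (by positivity) (by norm_num)]
        nlinarith
      linarith
    have hfreq : ∃ᶠ t in Filter.atTop, F t / t < L + δ/4 := by
      refine Filter.frequently_lt_of_liminf_lt hcob ?_
      rw [← hLam]; linarith
    obtain ⟨U₀, hU₀⟩ := Filter.eventually_atTop.mp
      ((hsmall (m * θ) (by positivity)).and ((hsmall (δ/2) (by linarith)).and
        (Filter.eventually_gt_atTop 0)))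
    rw [hLamE]
    refine Filter.liminf_le_of_frequently_le ?_ (by isBoundedDefault)
    rw [Filter.frequently_atTop]
    intro b
    obtain ⟨t, ht, htF⟩ := Filter.frequently_atTop.mp hfreq
      (max ((1 - m) * b) (max ((1 - m) * U₀) (1 - m)))
    have hc0 : (0:ℝ) < 1 - m := by linarith
    refine ⟨t / (1 - m), ?_, ?_⟩
    · rw [le_div_iff₀ hc0]
      have : (1 - m) * b ≤ t := le_trans (le_max_left _ _) ht
      linarith
    · set u : ℝ := t / (1 - m) with hudef
      have ht0 : 0 < t := lt_of_lt_of_le hc0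
        (le_trans (le_trans (le_max_right _ _) (le_max_right _ _)) ht)
      have hu0 : 0 < u := div_pos ht0 hc0
      have huU : U₀ ≤ u := by
        rw [hudef, le_div_iff₀ hc0]
        have : (1 - m) * U₀ ≤ t := le_trans (le_trans (le_max_left _ _) (le_max_right _ _)) ht
        linarith
      obtain ⟨h1, h2, h3⟩ := hU₀ u huU
      have htcu : t = (1 - m) * u := by rw [hudef]; field_simp
      have hθu0 : (0:ℝ) ≤ θ * u := by positivity
      have hθuu : θ * u ≤ u := by nlinarith
      have hηu0 : 0 ≤ η u := hη0 u
      have hηθu : η u ≤ θ * u := by nlinarith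
      have hg := (hηb u (θ * u) hθu0 hθuu).2 hηθu
      have hmono : f u (θ * u - η u) ≤ f u ((1 - m) * θ * u) := by
        have hvw : (1 - m) * θ * u ≤ θ * u - η u := by nlinarith
        have hsup := hfs u (θ * u - η u) ((1 - m) * θ * u) hvw (by linarith)
        have hnn := hf0 (θ * u - η u) ((1 - m) * θ * u) hvw
        linarith
      have hlip : f u ((1 - m) * θ * u) ≤ F ((1 - m) * u) + α * (u - (1 - m) * u) := by
        have h := hfl ((1 - m) * θ * u) u ((1 - m) * u) (by nlinarith) (by nlinarith)
        rw [abs_of_nonneg (by nlinarith : (0:ℝ) ≤ u - (1 - m) * u)] at h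
        have h' := (abs_le.mp h).2
        have heq : f ((1 - m) * u) ((1 - m) * θ * u) = F ((1 - m) * u) := by
          simp only [hFdef]
          norm_num [mul_comm, mul_assoc, mul_left_comm]
        linarith [heq ▸ h']
      have htlt : F t < (L + δ/4) * t := (div_lt_iff₀ ht0).mp htF
      have hkey : f u (θ * u - η u) + η u ≤ (L + δ) * u := by
        rw [htcu] at htlt
        have hFu : F ((1 - m) * u) < (L + δ/4) * ((1 - m) * u) := htlt
        have hLδ4 : (L + δ/4) * ((1 - m) * u) ≤ (L + δ/4) * u := by nlinarith
        nlinarith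
      calc g u (θ * u) / ENNReal.ofReal u
          ≤ ENNReal.ofReal (f u (θ * u - η u) + η u) / ENNReal.ofReal u :=
            ENNReal.div_le_div_right hg _
        _ ≤ ENNReal.ofReal ((L + δ) * u) / ENNReal.ofReal u :=
            ENNReal.div_le_div_right (ENNReal.ofReal_le_ofReal hkey) _
        _ = ENNReal.ofReal ((L + δ) * u / u) := (ENNReal.ofReal_div_of_pos hu0).symm
        _ = ENNReal.ofReal (L + δ) := by rw [mul_div_assoc, div_self hu0.ne', mul_one]
  -- LOWER BOUND
  have lower : ∀ δ : ℝ, 0 < δ → ENNReal.ofReal (L - δ) ≤ LamE g θ := by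
    intro δ hδ
    rcases le_or_gt (L - δ) 0 with hLδ | hLδ
    · rw [ENNReal.ofReal_eq_zero.mpr hLδ]; exact zero_le
    · have hevF : ∀ᶠ t in Filter.atTop, L - δ/2 < F t / t := by
        refine Filter.eventually_lt_of_lt_liminf ?_ hbdd_below
        rw [← hLam]; linarith
      obtain ⟨T₀, hT₀⟩ := Filter.eventually_atTop.mp hevF
      have hc₀ : (0:ℝ) < α/θ + 1 := by positivity
      rw [hLamE]
      refine Filter.le_liminf_of_le (by isBoundedDefault) ?_
      filter_upwards [hsmall (δ/(2*(α/θ+1))) (by positivity),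
        Filter.eventually_ge_atTop T₀, Filter.eventually_gt_atTop 0] with u hsm huT hu0
      have hηu0 : 0 ≤ η u := hη0 u
      obtain ⟨σ, hσdef⟩ : ∃ σ : ℝ, σ = u + η u / θ := ⟨_, rfl⟩
      have hσu : u ≤ σ := by
        rw [hσdef]; exact le_add_of_nonneg_right (div_nonneg hηu0 hθ0.le)
      have hσ0 : 0 < σ := lt_of_lt_of_le hu0 hσu
      have hθσ : θ * σ = θ * u + η u := by rw [hσdef]; field_simp; try ring
      have hFσ : L - δ/2 < F σ / σ := hT₀ σ (le_trans huT hσu)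
      have hFσ' : (L - δ/2) * u ≤ F σ := by
        have h := (lt_div_iff₀ hσ0).mp hFσ
        rcases le_or_gt (L - δ/2) 0 with h' | h'
        · nlinarith [hFnn σ hσ0.le]
        · nlinarith [mul_le_mul_of_nonneg_left hσu h'.le]
      have hsm' : (α/θ + 1) * η u < (δ/2) * u := by
        have h := mul_lt_mul_of_pos_left hsm hc₀
        calc (α/θ + 1) * η u < (α/θ + 1) * (δ/(2*(α/θ+1)) * u) := h
        _ = (δ/2) * u := by field_simp
      have hηdiv : η u ≤ η u / θ := by rw [le_div_iff₀ hθ0]; nlinarith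
      have hθuu : θ * u ≤ u := by nlinarith
      by_cases hcase : θ * u + η u ≤ u
      · -- main case
        have hg := (hηb u (θ * u) (by positivity) hθuu).1 (by linarith)
        have hlip := hfl (θ * u + η u) σ u (by rw [hσdef]; linarith) hcase
        rw [abs_of_nonneg (by linarith : (0:ℝ) ≤ σ - u)] at hlip
        have hσueq : σ - u = η u / θ := by rw [hσdef]; ring
        rw [hσueq] at hlip
        have hFσeq : f σ (θ * u + η u) = F σ := by
          simp only [hFdef]; rw [hθσ]
        have h2 := (abs_le.mp hlip).2
        rw [hFσeq] at h2
        have hαθ : α * (η u / θ) = (α/θ) * η u := by ring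
        rw [hαθ] at h2
        have hkey : (L - δ) * u ≤ f u (θ * u + η u) - η u := by nlinarith
        calc ENNReal.ofReal (L - δ)
            = ENNReal.ofReal ((L - δ) * u / u) := by
              rw [mul_div_assoc, div_self hu0.ne', mul_one]
          _ = ENNReal.ofReal ((L - δ) * u) / ENNReal.ofReal u :=
              ENNReal.ofReal_div_of_pos hu0
          _ ≤ ENNReal.ofReal (f u (θ * u + η u) - η u) / ENNReal.ofReal u :=
              ENNReal.div_le_div_right (ENNReal.ofReal_le_ofReal hkey) _
          _ ≤ g u (θ * u) / ENNReal.ofReal u := ENNReal.div_le_div_right hg _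
      · -- degenerate case: contradiction
        exfalso
        push_neg at hcase
        have hFσle : F σ ≤ α * (σ - θ * σ) := hFle σ hσ0.le
        have hσθ : σ - θ * σ ≤ η u / θ := by
          rw [le_div_iff₀ hθ0]
          have h1 : (1 - θ) * u ≤ η u := by linarith
          have e2 : θ * (θ * σ) = θ * (θ * u + η u) := by rw [hθσ]
          nlinarith [hθσ, e2, mul_le_mul_of_nonneg_left h1 hθ0.le]
        have h4 : F σ ≤ α / θ * η u := by
          have h5 : α * (σ - θ * σ) ≤ α * (η u / θ) := mul_le_mul_of_nonneg_left hσθ hα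
          have h6 : α * (η u / θ) = α / θ * η u := by ring
          linarith only [hFσle, h5, h6]
        have hchain : (L - δ/2) * u < (δ/2) * u := by nlinarith only [hηu0, hFσ', h4, hsm']
        nlinarith only [mul_pos hLδ hu0, hchain, hu0, hLδ]
  have hUB : LamE g θ ≤ ENNReal.ofReal L := by
    refine ENNReal.le_of_forall_pos_le_add fun ε hε _ => ?_
    have h := upper (ε : ℝ) (by exact_mod_cast hε)
    calc LamE g θ ≤ ENNReal.ofReal (L + ε) := h
    _ = ENNReal.ofReal L + ENNReal.ofReal (ε : ℝ) := ENNReal.ofReal_add hL0 ε.coe_nonneg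
    _ = ENNReal.ofReal L + ε := by rw [ENNReal.ofReal_coe_nnreal]
  have hLB : ENNReal.ofReal L ≤ LamE g θ := by
    refine ENNReal.le_of_forall_pos_le_add fun ε hε _ => ?_
    have h := lower (ε : ℝ) (by exact_mod_cast hε)
    calc ENNReal.ofReal L = ENNReal.ofReal ((L - ε) + ε) := by ring_nf
    _ ≤ ENNReal.ofReal (L - ε) + ENNReal.ofReal (ε : ℝ) := ENNReal.ofReal_add_le
    _ ≤ LamE g θ + ε := by
        rw [ENNReal.ofReal_coe_nnreal]; exact add_le_add_left h _
  exact le_antisymm hUB hLB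
end
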